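/- In the algebraic setting of the hypersurface spinor module, if ρ ∈ ℝ, j ∈ ℝⁿ and φ ≠ 0 satisfy (ρ e₀ − j)·φ = 0 (Clifford multiplication) and ρ ≥ ‖j‖, and if additionally ρ U_φ = u_φ j and the vector V_φ = −U_φ + u_φ e₀ is timelike, then ρ = 0 and j = 0. -/

import Mathlib

/-- In the hypersurface spinor module (Clifford multiplication
`c` by spacelike vectors, `A` by `e₀`), if `ρ ∈ ℝ`, `j ∈ ℝⁿ` and `φ ≠ 0` satisfy
`(ρe₀ − j)·φ = 0` and `ρ ≥ ‖j‖`, and if moreover `ρ U_φ = u_φ j` and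
`V_φ = −U_φ + u_φ e₀` is timelike (`‖U_φ‖² < u_φ²`), then `ρ = 0` and `j = 0`. -/
theorem stmt15 (n : ℕ) (S : Type*) [NormedAddCommGroup S] [InnerProductSpace ℂ S]
    (c : EuclideanSpace ℝ (Fin n) → Module.End ℂ S) (A : Module.End ℂ S)
    (hA2 : ∀ v, A (A v) = v)
    (hAsa : ∀ v w, (inner ℂ (A v) w : ℂ) = inner ℂ v (A w))
    (hskew : ∀ X v w, (inner ℂ (c X v) w : ℂ) = -inner ℂ v (c X w))
    (hanti : ∀ X v, A (c X v) = -c X (A v))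
    (hcliff : ∀ X v, c X (c X v) = -((‖X‖ : ℂ) ^ 2) • v)
    (φ : S) (hφ : φ ≠ 0) (U : EuclideanSpace ℝ (Fin n)) (u : ℝ)
    (hu : u = ‖φ‖ ^ 2)
    (hU : ∀ X, (inner ℝ U X : ℝ) = (inner ℂ (A (c X φ)) φ : ℂ).re)
    (ρ : ℝ) (j : EuclideanSpace ℝ (Fin n))
    (h0 : (ρ : ℂ) • A φ - c j φ = 0)
    (hdec : ‖j‖ ≤ ρ)
    (hprop : ρ • U = u • j)
    (htime : ‖U‖ ^ 2 < u ^ 2) :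
    ρ = 0 ∧ j = 0 := by
  have hnφ : (0:ℝ) < ‖φ‖ := norm_pos_iff.mpr hφ
  have heq : (ρ : ℂ) • A φ = c j φ := sub_eq_zero.mp h0
  have hc : (inner ℂ (c j φ) (c j φ) : ℂ) = (‖j‖ : ℂ) ^ 2 * inner ℂ φ φ := by
    rw [hskew, hcliff, inner_smul_right]
    ring
  rw [← heq] at hc
  rw [inner_smul_left, inner_smul_right, hAsa, hA2] at hc
  have hself : (inner ℂ φ φ : ℂ) = (‖φ‖ : ℂ) ^ 2 := inner_self_eq_norm_sq_to_K φ
  rw [hself] at hc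
  have hcr : ρ ^ 2 * ‖φ‖ ^ 2 = ‖j‖ ^ 2 * ‖φ‖ ^ 2 := by
    simp only [Complex.conj_ofReal] at hc
    have h2 : ((ρ ^ 2 * ‖φ‖ ^ 2 : ℝ) : ℂ) = ((‖j‖ ^ 2 * ‖φ‖ ^ 2 : ℝ) : ℂ) := by
      push_cast
      linear_combination hc
    exact_mod_cast h2
  have hsq : ρ ^ 2 = ‖j‖ ^ 2 := mul_right_cancel₀ (by positivity) hcr
  have hρnn : 0 ≤ ρ := le_trans (norm_nonneg j) hdec
  have hρj : ρ = ‖j‖ := by nlinarith [norm_nonneg j, sq_nonneg (ρ - ‖j‖), sq_nonneg (ρ + ‖j‖)]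
  have hu0 : 0 < u := by rw [hu]; positivity
  have hn : ρ * ‖U‖ = u * ‖j‖ := by
    have := congrArg norm hprop
    simpa [norm_smul, abs_of_nonneg hρnn, abs_of_nonneg hu0.le] using this
  have hUu : ‖U‖ < u := by nlinarith [norm_nonneg U]
  have hρ0 : ρ = 0 := by
    rcases eq_or_lt_of_le hρnn with h | h
    · exact h.symm
    · nlinarith
  refine ⟨hρ0, ?_⟩
  have : ‖j‖ = 0 := by rw [← hρj, hρ0]
  exact norm_eq_zero.mp this
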